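/- (Rule III) Let (Λ^k, z^k, w^k), ε_k be a singular sequence of normalized central configurations of the N-vortex problem with vorticities Γ_1, …, Γ_N ∈ ℝ∖{0}, and let J ⊆ {1, …, N} be such that for every j ∈ J and every l ∉ J one has ε_k² ≺ w^k_j − w^k_l (no z-stroke joins J to its complement, so J is an isolated component of the z-diagram). Then the moment of vorticity of J is z-close to the origin: ε_k² · ∑_{j ∈ J} Γ_j z^k_j → 0 as k → ∞. -/

import Mathlib

open Finset Filter Topology

/-- Normalized central configuration of the planar N-vortex problem (N = M + 2),
in the complexified variables (Λ, z, w), with the normalizations removing the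
translation, rotation and dilation freedoms. -/
def IsNCC {M : ℕ} (Γ : Fin (M + 2) → ℝ) (Λ : ℂ) (z w : Fin (M + 2) → ℂ) : Prop :=
  Λ ≠ 0 ∧ Function.Injective z ∧ Function.Injective w ∧
  (∀ n, Λ * z n =
    ∑ j ∈ Finset.univ.filter (fun j => j ≠ n), (Γ j : ℂ) / (w n - w j)) ∧
  (∀ n, Λ⁻¹ * w n =
    ∑ j ∈ Finset.univ.filter (fun j => j ≠ n), (Γ j : ℂ) / (z n - z j)) ∧
  z 1 - z 0 = w 1 - w 0

/-- max(max_n |z_n|, max_{i ≠ j} |w_i − w_j|⁻¹). -/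
noncomputable def bigSup {M : ℕ} (z w : Fin (M + 2) → ℂ) : ℝ :=
  sSup ({r | ∃ n, r = ‖z n‖} ∪
        {r | ∃ i j, i ≠ j ∧ r = ‖w i - w j‖⁻¹})

/-- a ≺ b : the ratio a/b tends to 0. -/
def Prec (a b : ℕ → ℂ) : Prop := Tendsto (fun k => a k / b k) atTop (nhds 0)

/-- a ⪯ b : the ratio a/b is bounded. -/
def BddRatio (a b : ℕ → ℂ) : Prop := ∃ C : ℝ, ∀ k, ‖a k / b k‖ ≤ C

/-- a ≈ b : both a/b and b/a are bounded. -/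
def SimEq (a b : ℕ → ℂ) : Prop := BddRatio a b ∧ BddRatio b a

/-- A singular sequence of normalized central configurations: |Λ^k| = 1,
ε_k > 0 tends to 0, and the maximal components of 𝒵 and 𝒲 both equal ε_k⁻². -/
def IsSingularSeq {M : ℕ} (Γ : Fin (M + 2) → ℝ) (Λ : ℕ → ℂ)
    (z w : ℕ → Fin (M + 2) → ℂ) (ε : ℕ → ℝ) : Prop :=
  (∀ k, IsNCC Γ (Λ k) (z k) (w k)) ∧
  (∀ k, ‖Λ k‖ = 1) ∧
  (∀ k, 0 < ε k) ∧ Tendsto ε atTop (nhds 0) ∧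
  (∀ k, bigSup (z k) (w k) = ε k ^ (-2 : ℤ)) ∧
  (∀ k, bigSup (w k) (z k) = ε k ^ (-2 : ℤ))

/-- Antisymmetry cancellation: the intra-J interaction sum vanishes. -/
lemma antisym_sum {N : ℕ} (Γ : Fin N → ℝ) (w : Fin N → ℂ) (J : Finset (Fin N)) :
    ∑ n ∈ J, (Γ n : ℂ) * ∑ j ∈ J.filter (fun j => j ≠ n), (Γ j : ℂ) / (w n - w j) = 0 := by
  have hrw : ∑ n ∈ J, (Γ n : ℂ) * ∑ j ∈ J.filter (fun j => j ≠ n), (Γ j : ℂ) / (w n - w j)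
      = ∑ n ∈ J, ∑ j ∈ J,
          (if j ≠ n then (Γ n : ℂ) * ((Γ j : ℂ) / (w n - w j)) else 0) := by
    refine Finset.sum_congr rfl fun n _ => ?_
    rw [Finset.mul_sum, Finset.sum_filter]
  rw [hrw]
  set A := ∑ n ∈ J, ∑ j ∈ J,
      (if j ≠ n then (Γ n : ℂ) * ((Γ j : ℂ) / (w n - w j)) else 0) with hA
  have hflip : ∀ n j : Fin N,
      (if j ≠ n then (Γ n : ℂ) * ((Γ j : ℂ) / (w n - w j)) else 0)
      = -(if n ≠ j then (Γ j : ℂ) * ((Γ n : ℂ) / (w j - w n)) else 0) := by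
    intro n j
    by_cases h : j = n
    · subst h
      norm_num
    · rw [if_pos h, if_pos (Ne.symm h)]
      have h1 : w n - w j = -(w j - w n) := by ring
      rw [h1, div_neg, mul_neg, neg_inj, div_eq_mul_inv, div_eq_mul_inv]; ring
  have h1 : A = -A := by
    calc A = ∑ n ∈ J, ∑ j ∈ J,
          -(if n ≠ j then (Γ j : ℂ) * ((Γ n : ℂ) / (w j - w n)) else 0) :=
        Finset.sum_congr rfl fun n _ => Finset.sum_congr rfl fun j _ => hflip n j
      _ = -∑ n ∈ J, ∑ j ∈ J,
          (if n ≠ j then (Γ j : ℂ) * ((Γ n : ℂ) / (w j - w n)) else 0) := by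
        simp_rw [Finset.sum_neg_distrib]
      _ = -A := by rw [Finset.sum_comm]
  have h2 : (2 : ℂ) * A = 0 := by linear_combination h1
  have := mul_eq_zero.mp h2
  rcases this with h | h
  · norm_num at h
  · exact h

/-- Rule III: the moment of vorticity of an isolated component of the z-diagram is
z-close to the origin. -/
theorem rule_III {M : ℕ} (Γ : Fin (M + 2) → ℝ) (hΓ : ∀ j, Γ j ≠ 0)
    (Λ : ℕ → ℂ) (z w : ℕ → Fin (M + 2) → ℂ) (ε : ℕ → ℝ)
    (hsing : IsSingularSeq Γ Λ z w ε)
    (J : Finset (Fin (M + 2)))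
    (hiso : ∀ j ∈ J, ∀ l ∉ J,
      Prec (fun k => ((ε k : ℂ)) ^ 2) (fun k => w k j - w k l)) :
    Tendsto (fun k => ((ε k : ℂ)) ^ 2 * ∑ j ∈ J, (Γ j : ℂ) * z k j) atTop (nhds 0) := by
  obtain ⟨hncc, hΛ, hεpos, hεto, h5, h6⟩ := hsing
  -- Step 1: the key identity after multiplying by Λ k.
  have step1 : ∀ k, Λ k * ∑ j ∈ J, (Γ j : ℂ) * z k j
      = ∑ n ∈ J, ∑ j ∈ Jᶜ, (Γ n : ℂ) * ((Γ j : ℂ) / (w k n - w k j)) := by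
    intro k
    have zeq := (hncc k).2.2.2.1
    have split : ∀ n ∈ J, (Finset.univ.filter (fun j => j ≠ n) : Finset (Fin (M + 2)))
        = J.filter (fun j => j ≠ n) ∪ Jᶜ := by
      intro n hn
      ext j
      simp only [Finset.mem_filter, Finset.mem_union, Finset.mem_univ, true_and,
        Finset.mem_compl]
      constructor
      · intro hj
        by_cases h : j ∈ J
        · exact Or.inl ⟨h, hj⟩
        · exact Or.inr h
      · rintro (⟨_, hj⟩ | hj)
        · exact hj
        · exact fun h => hj (h ▸ hn)
    have hdisj : ∀ n : Fin (M + 2), Disjoint (J.filter (fun j => j ≠ n)) Jᶜ :=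
      fun n => disjoint_compl_right.mono_left (Finset.filter_subset _ _)
    rw [Finset.mul_sum]
    have hterm : ∀ n ∈ J, Λ k * ((Γ n : ℂ) * z k n)
        = (Γ n : ℂ) * (∑ j ∈ J.filter (fun j => j ≠ n), (Γ j : ℂ) / (w k n - w k j)
            + ∑ j ∈ Jᶜ, (Γ j : ℂ) / (w k n - w k j)) := by
      intro n hn
      rw [mul_left_comm, zeq n, split n hn, Finset.sum_union (hdisj n)]
    rw [Finset.sum_congr rfl hterm]
    simp_rw [mul_add]
    rw [Finset.sum_add_distrib, antisym_sum Γ (w k) J, zero_add]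
    exact Finset.sum_congr rfl fun n _ => Finset.mul_sum _ _ _
  -- Step 2: the product with Λ tends to 0.
  have hΛS : Tendsto (fun k => Λ k * (((ε k : ℂ)) ^ 2 * ∑ j ∈ J, (Γ j : ℂ) * z k j))
      atTop (nhds 0) := by
    have heq : (fun k => Λ k * (((ε k : ℂ)) ^ 2 * ∑ j ∈ J, (Γ j : ℂ) * z k j))
        = fun k => ∑ n ∈ J, ∑ j ∈ Jᶜ,
            (Γ n : ℂ) * ((Γ j : ℂ) * (((ε k : ℂ)) ^ 2 / (w k n - w k j))) := by
      funext k
      rw [mul_left_comm, step1 k, Finset.mul_sum]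
      refine Finset.sum_congr rfl fun n _ => ?_
      rw [Finset.mul_sum]
      refine Finset.sum_congr rfl fun j _ => ?_
      rw [div_eq_mul_inv, div_eq_mul_inv]; ring
    rw [heq]
    have : Tendsto (fun k => ∑ n ∈ J, ∑ j ∈ Jᶜ,
        (Γ n : ℂ) * ((Γ j : ℂ) * (((ε k : ℂ)) ^ 2 / (w k n - w k j)))) atTop
        (nhds (∑ n ∈ J, ∑ j ∈ Jᶜ, (0 : ℂ))) := by
      refine tendsto_finset_sum _ fun n hn => ?_
      refine tendsto_finset_sum _ fun j hj => ?_
      have h0 := hiso n hn j (Finset.mem_compl.mp hj)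
      have h1 : Tendsto (fun k => (Γ j : ℂ) * (((ε k : ℂ)) ^ 2 / (w k n - w k j)))
          atTop (nhds ((Γ j : ℂ) * 0)) := h0.const_mul _
      have h2 : Tendsto (fun k => (Γ n : ℂ) * ((Γ j : ℂ) * (((ε k : ℂ)) ^ 2 / (w k n - w k j))))
          atTop (nhds ((Γ n : ℂ) * ((Γ j : ℂ) * 0))) := h1.const_mul _
      simpa using h2
    simpa using this
  -- Step 3: remove the factor Λ using |Λ| = 1.
  rw [tendsto_zero_iff_norm_tendsto_zero]
  have h2 := tendsto_zero_iff_norm_tendsto_zero.mp hΛS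
  have heq : (fun k => ‖((ε k : ℂ)) ^ 2 * ∑ j ∈ J, (Γ j : ℂ) * z k j‖)
      = fun k => ‖Λ k * (((ε k : ℂ)) ^ 2 * ∑ j ∈ J, (Γ j : ℂ) * z k j)‖ := by
    funext k
    simp [norm_mul, hΛ k]
  rw [heq]
  exact h2
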